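/- Let d ≥ 1 and p ≥ 1 be integers and let h > 0 be such that 1/h is a positive integer. Let W̃_{p,h} denote the linear span of all tensor-product functions (x₁,…,x_d) ↦ ∏_{l=1}^{d} f_l(x_l) with f_1,…,f_d ∈ S̃_{p,h}(0,1). Then every w ∈ W̃_{p,h} satisfies |w|_{H¹((0,1)^d)} ≤ 2·√(3d) · h^{−1} · ‖w‖_{L²((0,1)^d)}, where ‖v‖_{L²((0,1)^d)} := (∫_{(0,1)^d} v(x)² dx)^{1/2} and |w|_{H¹((0,1)^d)} := (∫_{(0,1)^d} ‖∇w(x)‖² dx)^{1/2} (the gradient of w is defined off the null set of grid hyperplanes). -/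

import Mathlib

open MeasureTheory Set Polynomial intervalIntegral Topology Filter ENNReal

/-- The `L²(a,b)` norm of a function. -/
noncomputable def L2 (a b : ℝ) (v : ℝ → ℝ) : ℝ :=
  Real.sqrt (∫ x in Set.Ioo a b, v x ^ 2)

/-- `u` belongs to the spline space `S_{p,h}(a,b)` of maximum smoothness
(`u` is `(p-1)`-times continuously differentiable on `[a,b]` and coincides with a
polynomial of degree at most `p` on each of the `n = (b-a)/h` subintervals). -/
def IsSplineOn (p n : ℕ) (h a b : ℝ) (u : ℝ → ℝ) : Prop :=
  ContDiffOn ℝ (p - 1 : ℕ) u (Set.Icc a b) ∧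
  ∀ j < n, ∃ P : Polynomial ℝ, P.natDegree ≤ p ∧
    ∀ x ∈ Set.Icc (a + j * h) (a + (j + 1) * h), u x = P.eval x

/-- `u ∈ H¹(a,b)` with weak derivative `g`: `u` is absolutely continuous on `[a,b]`
(an indefinite integral of the locally integrable `g`) and `g` is square-integrable. -/
def IsH1On (a b : ℝ) (u g : ℝ → ℝ) : Prop :=
  IntervalIntegrable g volume a b ∧
  (∀ x ∈ Set.Icc a b, u x = u a + ∫ t in a..x, g t) ∧
  IntegrableOn (fun x => g x ^ 2) (Set.Ioo a b)

/-- The reduced spline space `S̃_{p,h}(a,b)`: splines whose odd derivatives of order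
`< p` vanish at both endpoints. -/
def IsReducedSplineOn (p n : ℕ) (h a b : ℝ) (u : ℝ → ℝ) : Prop :=
  IsSplineOn p n h a b u ∧
  ∀ l : ℕ, 2 * l + 1 < p →
    iteratedDerivWithin (2 * l + 1) u (Set.Icc a b) a = 0 ∧
    iteratedDerivWithin (2 * l + 1) u (Set.Icc a b) b = 0

/-- The set of tensor-product functions `x ↦ ∏_l f_l(x_l)` with each factor in the
reduced spline space `S̃_{p,h}(0,1)`; its span is `W̃_{p,h}`. -/
def TensorReduced (p n d : ℕ) (h : ℝ) : Set ((Fin d → ℝ) → ℝ) :=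
  { w | ∃ f : Fin d → ℝ → ℝ, (∀ l, IsReducedSplineOn p n h 0 1 (f l)) ∧
      w = fun x => ∏ l, f l (x l) }


lemma iterDeriv_poly (k : ℕ) (P : Polynomial ℝ) :
    iteratedDeriv k (fun x => P.eval x) = fun x => (derivative^[k] P).eval x := by
  induction k generalizing P with
  | zero => simp
  | succ k ih =>
    have : deriv (fun x => P.eval x) = fun x => P.derivative.eval x := by
      funext x; exact Polynomial.deriv P
    rw [iteratedDeriv_succ', Function.iterate_succ_apply, this, ih P.derivative]

lemma interior_iteratedDerivWithin {u : ℝ → ℝ} {P : Polynomial ℝ} {s o : Set ℝ} (ho : IsOpen o)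
    (hos : o ⊆ s) (heq : Set.EqOn u (fun y => P.eval y) o) {x : ℝ} (hx : x ∈ o) (k : ℕ) :
    iteratedDerivWithin k u s x = (derivative^[k] P).eval x := by
  have h1 : iteratedFDerivWithin ℝ k u s x = iteratedFDeriv ℝ k (fun y => P.eval y) x := by
    rw [← iteratedFDerivWithin_inter_open ho hx, inter_eq_self_of_subset_right hos,
      iteratedFDerivWithin_congr heq hx k, ← univ_inter o,
      iteratedFDerivWithin_inter_open ho hx, iteratedFDerivWithin_univ]
  have h2 : iteratedDerivWithin k u s x = iteratedDeriv k (fun y => P.eval y) x := by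
    simp only [iteratedDerivWithin, iteratedDeriv, h1]
  rw [h2, iterDeriv_poly]

lemma eval_at_closure {g : ℝ → ℝ} {Q : Polynomial ℝ} {s o : Set ℝ} {c : ℝ}
    (hg : ContinuousOn g s) (hos : o ⊆ s) (hc : c ∈ s) (hcc : c ∈ closure o)
    (heq : Set.EqOn g (fun y => Q.eval y) o) : g c = Q.eval c := by
  have hne : (𝓝[o] c).NeBot := mem_closure_iff_nhdsWithin_neBot.mp hcc
  have h1 : Filter.Tendsto g (𝓝[o] c) (𝓝 (g c)) :=
    ((hg c hc).mono hos).tendsto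
  have h2 : Filter.Tendsto g (𝓝[o] c) (𝓝 (Q.eval c)) := by
    have hcont : Filter.Tendsto (fun y => Q.eval y) (𝓝[o] c) (𝓝 (Q.eval c)) :=
      ((Q.continuous.tendsto c).mono_left nhdsWithin_le_nhds)
    refine hcont.congr' ?_
    filter_upwards [self_mem_nhdsWithin] with y hy
    exact (heq hy).symm
  exact tendsto_nhds_unique h1 h2

lemma poly_ftc (P : Polynomial ℝ) (a b : ℝ) :
    ∫ t in a..b, P.derivative.eval t = P.eval b - P.eval a := by
  have h : ∀ x ∈ Set.uIcc a b, HasDerivAt (fun y => P.eval y) (P.derivative.eval x) x :=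
    fun x _ => P.hasDerivAt x
  rw [intervalIntegral.integral_eq_sub_of_hasDerivAt h
    ((P.derivative.continuous).intervalIntegrable a b)]


lemma cs_interval {f g : ℝ → ℝ} (hf : Continuous f) (hg : Continuous g) {a b : ℝ} (hab : a ≤ b) :
    (∫ t in a..b, f t * g t) ^ 2 ≤ (∫ t in a..b, f t ^ 2) * ∫ t in a..b, g t ^ 2 := by
  have hint : ∀ q : ℝ → ℝ, Continuous q → IntervalIntegrable q volume a b :=
    fun q hq => hq.intervalIntegrable a b
  have key : ∀ lam : ℝ, 0 ≤ (∫ t in a..b, g t ^ 2) * (lam * lam) +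
      (2 * ∫ t in a..b, f t * g t) * lam + ∫ t in a..b, f t ^ 2 := by
    intro lam
    have h0 : 0 ≤ ∫ t in a..b, (f t + lam * g t) ^ 2 :=
      intervalIntegral.integral_nonneg hab (fun t _ => sq_nonneg _)
    have hexp : ∫ t in a..b, (f t + lam * g t) ^ 2 =
        (∫ t in a..b, g t ^ 2) * (lam * lam) +
        (2 * ∫ t in a..b, f t * g t) * lam + ∫ t in a..b, f t ^ 2 := by
      have e1 : ∀ t, (f t + lam * g t) ^ 2 =
          (lam * lam) * g t ^ 2 + (2 * lam) * (f t * g t) + f t ^ 2 := by intro t; ring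
      simp_rw [e1]
      rw [intervalIntegral.integral_add, intervalIntegral.integral_add,
        intervalIntegral.integral_const_mul, intervalIntegral.integral_const_mul]
      · ring
      · exact hint _ ((continuous_const.mul (hg.pow 2)))
      · exact hint _ (continuous_const.mul (hf.mul hg))
      · exact (hint _ ((continuous_const.mul (hg.pow 2)))).add
          (hint _ (continuous_const.mul (hf.mul hg)))
      · exact hint _ (hf.pow 2)
    linarith [hexp ▸ h0]
  have hd := discrim_le_zero key
  unfold discrim at hd
  nlinarith [hd]


lemma elem_bound {Q : Polynomial ℝ} (hQ : Q.natDegree ≤ 1) {a h : ℝ} (hh : 0 < h) :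
    ∫ t in a..a + h, (Q.derivative.eval t) ^ 2 ≤
      12 * (h⁻¹) ^ 2 * ∫ t in a..a + h, (Q.eval t) ^ 2 := by
  set c0 := Q.coeff 0
  set c1 := Q.coeff 1
  have heval : ∀ t, Q.eval t = c0 + c1 * t := by
    intro t
    have := Polynomial.eval_eq_sum_range' (Nat.lt_succ_of_le hQ) t
    simpa [Finset.sum_range_succ, c0, c1, mul_comm] using this
  have hd : ∀ t, Q.derivative.eval t = c1 := by
    intro t
    have hdeg : Q.derivative.natDegree = 0 := by
      have := Polynomial.natDegree_derivative_le Q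
      omega
    rw [Polynomial.eval_eq_sum_range' (n := 1) (by omega) t]
    simp [Polynomial.coeff_derivative, c1]
  simp_rw [heval, hd]
  have e1 : ∀ t : ℝ, (c0 + c1 * t) ^ 2 = c0 ^ 2 + (2 * c0 * c1) * t + c1 ^ 2 * t ^ 2 := by
    intro t; ring
  simp_rw [e1]
  rw [intervalIntegral.integral_add, intervalIntegral.integral_add,
    intervalIntegral.integral_const_mul, intervalIntegral.integral_const_mul,
    intervalIntegral.integral_const, intervalIntegral.integral_const, integral_id, integral_pow]
  · have h2 : (0:ℝ) < h ^ 2 := by positivity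
    have hcast : ((2:ℕ):ℝ) + 1 = 3 := by norm_num
    rw [hcast, smul_eq_mul, smul_eq_mul]
    rw [inv_pow, mul_comm (12:ℝ) ((h^2)⁻¹), mul_assoc, inv_mul_eq_div, le_div_iff₀ h2]
    nlinarith [sq_nonneg (2 * c0 + c1 * (2 * a + h)), hh, mul_pos hh h2]
  all_goals
    exact (by continuity : Continuous _).intervalIntegrable _ _


lemma spline_struct (p n : ℕ) (h : ℝ) (hp : 1 ≤ p) (hh : 0 < h) (hn : 0 < n)
    (hgrid : (1:ℝ) = n*h) (u : ℝ → ℝ) (hu : IsReducedSplineOn p n h 0 1 u) :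
    ∃ P : ℕ → Polynomial ℝ,
      (∀ j, j < n → (P j).natDegree ≤ p) ∧
      (∀ j, j < n → ∀ x ∈ Set.Ioo ((j:ℝ)*h) (((j:ℝ)+1)*h), u x = (P j).eval x) ∧
      (∀ k, k ≤ p - 1 → ∀ j, j + 1 < n →
        (derivative^[k] (P j)).eval (((j:ℝ)+1)*h)
          = (derivative^[k] (P (j+1))).eval (((j:ℝ)+1)*h)) ∧
      (∀ k, k < p → Odd k →
        (derivative^[k] (P 0)).eval 0 = 0 ∧ (derivative^[k] (P (n-1))).eval 1 = 0) := by
  obtain ⟨⟨hsm, hpoly⟩, hbc⟩ := hu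
  choose! P hPdeg hPeq using hpoly
  -- basic grid facts
  have hIoo : ∀ j : ℕ, j < n → Set.Ioo ((j:ℝ)*h) (((j:ℝ)+1)*h) ⊆ Set.Icc (0:ℝ) 1 := by
    intro j hj x hx
    have h1 : (0:ℝ) ≤ (j:ℝ)*h := by positivity
    have h2 : ((j:ℝ)+1)*h ≤ 1 := by
      rw [hgrid]
      have : (j:ℝ)+1 ≤ (n:ℝ) := by exact_mod_cast hj
      nlinarith
    exact ⟨le_of_lt (lt_of_le_of_lt h1 hx.1), le_of_lt (lt_of_lt_of_le hx.2 h2)⟩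
  have hne : ∀ j : ℕ, (j:ℝ)*h < ((j:ℝ)+1)*h := by
    intro j; nlinarith [hh, Nat.cast_nonneg (α := ℝ) j]
  have hueq : ∀ j, j < n → Set.EqOn u (fun y => (P j).eval y) (Set.Ioo ((j:ℝ)*h) (((j:ℝ)+1)*h)) := by
    intro j hj x hx
    exact hPeq j hj x (by
      constructor
      · simpa using le_of_lt hx.1
      · simpa using le_of_lt hx.2)
  have hcont : ∀ k, k ≤ p - 1 →
      ContinuousOn (iteratedDerivWithin k u (Set.Icc (0:ℝ) 1)) (Set.Icc (0:ℝ) 1) := by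
    intro k hk
    exact hsm.continuousOn_iteratedDerivWithin (by exact_mod_cast hk)
      (uniqueDiffOn_Icc (by norm_num))
  -- node values
  have hval : ∀ k, k ≤ p - 1 → ∀ j, j < n → ∀ c : ℝ, c = (j:ℝ)*h ∨ c = ((j:ℝ)+1)*h →
      iteratedDerivWithin k u (Set.Icc (0:ℝ) 1) c = (derivative^[k] (P j)).eval c := by
    intro k hk j hj c hc
    have hclo : c ∈ closure (Set.Ioo ((j:ℝ)*h) (((j:ℝ)+1)*h)) := by
      rw [closure_Ioo (ne_of_lt (hne j))]
      rcases hc with rfl | rfl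
      · exact ⟨le_refl _, le_of_lt (hne j)⟩
      · exact ⟨le_of_lt (hne j), le_refl _⟩
    have hcIcc : c ∈ Set.Icc (0:ℝ) 1 := by
      have := hIoo j hj
      have h2 : Set.Icc ((j:ℝ)*h) (((j:ℝ)+1)*h) ⊆ Set.Icc (0:ℝ) 1 := by
        rw [← closure_Ioo (ne_of_lt (hne j))]
        exact closure_minimal this isClosed_Icc
      apply h2
      rw [← closure_Ioo (ne_of_lt (hne j))]
      exact hclo
    refine eval_at_closure (hcont k hk) (hIoo j hj) hcIcc hclo ?_
    intro x hx
    exact interior_iteratedDerivWithin isOpen_Ioo (hIoo j hj) (hueq j hj) hx k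
  refine ⟨P, fun j hj => hPdeg j hj, fun j hj => hueq j hj, ?_, ?_⟩
  · intro k hk j hjn
    have hj : j < n := by omega
    have h1 := hval k hk j hj (((j:ℝ)+1)*h) (Or.inr rfl)
    have h2 := hval k hk (j+1) hjn (((j+1:ℕ):ℝ)*h) (Or.inl rfl)
    have hcast : ((j+1:ℕ):ℝ) = (j:ℝ)+1 := by push_cast; ring
    rw [hcast] at h2
    rw [← h1, h2]
  · intro k hk hodd
    obtain ⟨l, hl⟩ := hodd
    have hkk : k = 2*l+1 := by omega
    have hbl := hbc l (by omega)
    constructor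
    · have h0 := hval k (by omega) 0 hn 0 (Or.inl (by simp))
      rw [← h0, hkk]
      exact hbl.1
    · have h1 := hval k (by omega) (n-1) (by omega) 1 (Or.inr (by
        have : ((n-1:ℕ):ℝ) = (n:ℝ)-1 := by
          rw [Nat.cast_sub hn]; simp
        rw [this]
        rw [hgrid]; ring))
      rw [← h1, hkk]
      exact hbl.2


lemma chain_bound (p n : ℕ) (h : ℝ) (hp : 1 ≤ p) (hh : 0 < h) (hn : 0 < n)
    (hgrid : (1:ℝ) = n*h) (P : ℕ → Polynomial ℝ)
    (hdeg : ∀ j, j < n → (P j).natDegree ≤ p)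
    (hmatch : ∀ k, k ≤ p - 1 → ∀ j, j + 1 < n →
      (derivative^[k] (P j)).eval (((j:ℝ)+1)*h)
        = (derivative^[k] (P (j+1))).eval (((j:ℝ)+1)*h))
    (hbdry : ∀ k, k < p → Odd k →
      (derivative^[k] (P 0)).eval 0 = 0 ∧ (derivative^[k] (P (n-1))).eval 1 = 0) :
    (∑ j ∈ Finset.range n,
        ∫ t in ((j:ℝ)*h)..(((j:ℝ)+1)*h), ((derivative^[1] (P j)).eval t)^2) ≤
      12*(h⁻¹)^2 * ∑ j ∈ Finset.range n,
        ∫ t in ((j:ℝ)*h)..(((j:ℝ)+1)*h), ((derivative^[0] (P j)).eval t)^2 := by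
  set c : ℝ := 12*(h⁻¹)^2 with hc
  have hc0 : 0 ≤ c := by positivity
  set N : ℕ → ℝ := fun k => ∑ j ∈ Finset.range n,
    ∫ t in ((j:ℝ)*h)..(((j:ℝ)+1)*h), ((derivative^[k] (P j)).eval t)^2 with hN
  have hne : ∀ j : ℕ, (j:ℝ)*h ≤ ((j:ℝ)+1)*h := by
    intro j; nlinarith [Nat.cast_nonneg (α := ℝ) j]
  have Nnonneg : ∀ k, 0 ≤ N k := by
    intro k
    refine Finset.sum_nonneg fun j _ => ?_
    exact intervalIntegral.integral_nonneg (hne j) (fun t _ => sq_nonneg _)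
  have hDsucc : ∀ (k j : ℕ), derivative^[k+1] (P j) = derivative (derivative^[k] (P j)) :=
    fun k j => Function.iterate_succ_apply' _ _ _
  -- integrability helper
  have hint : ∀ (Q : Polynomial ℝ) (a b : ℝ),
      IntervalIntegrable (fun t => Q.eval t) volume a b :=
    fun Q a b => Q.continuous.intervalIntegrable a b
  -- IBP squared inequality
  have Nsq : ∀ m, 1 ≤ m → m < p → N m ^ 2 ≤ N (m-1) * N (m+1) := by
    intro m hm1 hmp
    have hm : m - 1 + 1 = m := by omega
    -- per element identity
    have elem : ∀ j, j < n →
        (∫ t in ((j:ℝ)*h)..(((j:ℝ)+1)*h), ((derivative^[m] (P j)).eval t)^2)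
          = ((derivative^[m-1] (P j)) * (derivative^[m] (P j))).eval (((j:ℝ)+1)*h)
            - ((derivative^[m-1] (P j)) * (derivative^[m] (P j))).eval ((j:ℝ)*h)
            - ∫ t in ((j:ℝ)*h)..(((j:ℝ)+1)*h),
                (derivative^[m-1] (P j)).eval t * (derivative^[m+1] (P j)).eval t := by
      intro j hj
      have hftc := poly_ftc ((derivative^[m-1] (P j)) * (derivative^[m] (P j)))
        ((j:ℝ)*h) (((j:ℝ)+1)*h)
      have hder : ((derivative^[m-1] (P j)) * (derivative^[m] (P j))).derivative
          = (derivative^[m] (P j)) * (derivative^[m] (P j))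
            + (derivative^[m-1] (P j)) * (derivative^[m+1] (P j)) := by
        rw [derivative_mul, ← hDsucc, ← hDsucc, hm]
      rw [hder] at hftc
      have hsplit : (∫ t in ((j:ℝ)*h)..(((j:ℝ)+1)*h),
            ((derivative^[m] (P j)) * (derivative^[m] (P j))
              + (derivative^[m-1] (P j)) * (derivative^[m+1] (P j))).eval t)
          = (∫ t in ((j:ℝ)*h)..(((j:ℝ)+1)*h), ((derivative^[m] (P j)).eval t)^2)
            + ∫ t in ((j:ℝ)*h)..(((j:ℝ)+1)*h),
                (derivative^[m-1] (P j)).eval t * (derivative^[m+1] (P j)).eval t := by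
        rw [← intervalIntegral.integral_add
          (f := fun t => ((derivative^[m] (P j)).eval t)^2)
          (g := fun t => (derivative^[m-1] (P j)).eval t * (derivative^[m+1] (P j)).eval t)
          (((derivative^[m] (P j)).continuous.pow 2).intervalIntegrable _ _)
          (((derivative^[m-1] (P j)).continuous.mul
            (derivative^[m+1] (P j)).continuous).intervalIntegrable _ _)]
        congr 1
        funext t
        simp [sq]
      rw [hsplit] at hftc
      linarith [hftc]
    -- telescoping
    set ψ : ℕ → ℝ := fun j =>
      ((derivative^[m-1] (P (min j (n-1)))) * (derivative^[m] (P (min j (n-1))))).eval ((j:ℝ)*h)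
      with hψ
    have hψa : ∀ j, j < n → ((derivative^[m-1] (P j)) * (derivative^[m] (P j))).eval ((j:ℝ)*h)
        = ψ j := by
      intro j hj
      have : min j (n-1) = j := by omega
      simp only [hψ, this]
    have hψb : ∀ j, j < n →
        ((derivative^[m-1] (P j)) * (derivative^[m] (P j))).eval (((j:ℝ)+1)*h) = ψ (j+1) := by
      intro j hj
      have hcast : ((j+1:ℕ):ℝ) = (j:ℝ)+1 := by push_cast; ring
      by_cases hj1 : j + 1 < n
      · have : min (j+1) (n-1) = j+1 := by omega
        simp only [hψ, this, hcast]
        rw [eval_mul, eval_mul, hmatch (m-1) (by omega) j hj1, hmatch m (by omega) j hj1]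
      · have : min (j+1) (n-1) = j := by omega
        simp only [hψ, this, hcast]
    have htel : ∑ j ∈ Finset.range n,
        (((derivative^[m-1] (P j)) * (derivative^[m] (P j))).eval (((j:ℝ)+1)*h)
          - ((derivative^[m-1] (P j)) * (derivative^[m] (P j))).eval ((j:ℝ)*h))
        = ψ n - ψ 0 := by
      rw [← Finset.sum_range_sub ψ]
      refine Finset.sum_congr rfl fun j hj => ?_
      rw [hψa j (Finset.mem_range.mp hj), hψb j (Finset.mem_range.mp hj)]
    -- boundary values vanish
    have hodd : Odd m ∨ Odd (m-1) := by
      rcases Nat.even_or_odd m with he | ho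
      · right
        obtain ⟨r, hr⟩ := he
        exact ⟨r - 1, by omega⟩
      · left; exact ho
    have hψn : ψ n = 0 := by
      have hcast : ((n:ℕ):ℝ)*h = 1 := by rw [← hgrid]
      have hmin : min n (n-1) = n - 1 := by omega
      simp only [hψ, hmin, hcast, eval_mul]
      rcases hodd with ho | ho
      · rw [(hbdry m hmp ho).2, mul_zero]
      · rw [(hbdry (m-1) (by omega) ho).2, zero_mul]
    have hψ0 : ψ 0 = 0 := by
      have hmin : min 0 (n-1) = 0 := by omega
      simp only [hψ, hmin, Nat.cast_zero, zero_mul, eval_mul]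
      rcases hodd with ho | ho
      · rw [(hbdry m hmp ho).1, mul_zero]
      · rw [(hbdry (m-1) (by omega) ho).1, zero_mul]
    -- N m = - sum of cross terms
    have hNm : N m = - ∑ j ∈ Finset.range n, ∫ t in ((j:ℝ)*h)..(((j:ℝ)+1)*h),
        (derivative^[m-1] (P j)).eval t * (derivative^[m+1] (P j)).eval t := by
      have : N m = ∑ j ∈ Finset.range n,
          ((((derivative^[m-1] (P j)) * (derivative^[m] (P j))).eval (((j:ℝ)+1)*h)
            - ((derivative^[m-1] (P j)) * (derivative^[m] (P j))).eval ((j:ℝ)*h))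
          - ∫ t in ((j:ℝ)*h)..(((j:ℝ)+1)*h),
              (derivative^[m-1] (P j)).eval t * (derivative^[m+1] (P j)).eval t) := by
        refine Finset.sum_congr rfl fun j hj => ?_
        rw [elem j (Finset.mem_range.mp hj)]
      rw [this, Finset.sum_sub_distrib, htel, hψn, hψ0]
      ring
    -- Cauchy-Schwarz
    set x : ℕ → ℝ := fun j => ∫ t in ((j:ℝ)*h)..(((j:ℝ)+1)*h),
      ((derivative^[m-1] (P j)).eval t)^2 with hx
    set y : ℕ → ℝ := fun j => ∫ t in ((j:ℝ)*h)..(((j:ℝ)+1)*h),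
      ((derivative^[m+1] (P j)).eval t)^2 with hy
    have hx0 : ∀ j, 0 ≤ x j := fun j =>
      intervalIntegral.integral_nonneg (hne j) (fun t _ => sq_nonneg _)
    have hy0 : ∀ j, 0 ≤ y j := fun j =>
      intervalIntegral.integral_nonneg (hne j) (fun t _ => sq_nonneg _)
    have habs : ∀ j, |∫ t in ((j:ℝ)*h)..(((j:ℝ)+1)*h),
        (derivative^[m-1] (P j)).eval t * (derivative^[m+1] (P j)).eval t|
        ≤ Real.sqrt (x j) * Real.sqrt (y j) := by
      intro j
      have hcs := cs_interval (derivative^[m-1] (P j)).continuous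
        (derivative^[m+1] (P j)).continuous (hne j)
      rw [← Real.sqrt_sq_eq_abs, ← Real.sqrt_mul (hx0 j)]
      exact Real.sqrt_le_sqrt hcs
    have hNm_le : N m ≤ ∑ j ∈ Finset.range n, Real.sqrt (x j) * Real.sqrt (y j) := by
      rw [hNm]
      calc - ∑ j ∈ Finset.range n, ∫ t in ((j:ℝ)*h)..(((j:ℝ)+1)*h),
            (derivative^[m-1] (P j)).eval t * (derivative^[m+1] (P j)).eval t
          ≤ |∑ j ∈ Finset.range n, ∫ t in ((j:ℝ)*h)..(((j:ℝ)+1)*h),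
            (derivative^[m-1] (P j)).eval t * (derivative^[m+1] (P j)).eval t| :=
            neg_le_abs _
        _ ≤ ∑ j ∈ Finset.range n, |∫ t in ((j:ℝ)*h)..(((j:ℝ)+1)*h),
            (derivative^[m-1] (P j)).eval t * (derivative^[m+1] (P j)).eval t| :=
            Finset.abs_sum_le_sum_abs _ _
        _ ≤ ∑ j ∈ Finset.range n, Real.sqrt (x j) * Real.sqrt (y j) :=
            Finset.sum_le_sum fun j _ => habs j
    have hsumcs : (∑ j ∈ Finset.range n, Real.sqrt (x j) * Real.sqrt (y j))^2
        ≤ N (m-1) * N (m+1) := by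
      have hle := Real.sum_sqrt_mul_sqrt_le (Finset.range n) hx0 hy0
      have hsq : (Real.sqrt (∑ j ∈ Finset.range n, x j) *
          Real.sqrt (∑ j ∈ Finset.range n, y j))^2
          = (∑ j ∈ Finset.range n, x j) * (∑ j ∈ Finset.range n, y j) := by
        rw [mul_pow, Real.sq_sqrt (Finset.sum_nonneg fun j _ => hx0 j),
          Real.sq_sqrt (Finset.sum_nonneg fun j _ => hy0 j)]
      have h1 : 0 ≤ ∑ j ∈ Finset.range n, Real.sqrt (x j) * Real.sqrt (y j) :=
        Finset.sum_nonneg fun j _ => mul_nonneg (Real.sqrt_nonneg _) (Real.sqrt_nonneg _)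
      calc (∑ j ∈ Finset.range n, Real.sqrt (x j) * Real.sqrt (y j))^2
          ≤ (Real.sqrt (∑ j ∈ Finset.range n, x j) *
            Real.sqrt (∑ j ∈ Finset.range n, y j))^2 := by
            apply pow_le_pow_left₀ h1 hle
        _ = N (m-1) * N (m+1) := by rw [hsq]
    have h1 : 0 ≤ ∑ j ∈ Finset.range n, Real.sqrt (x j) * Real.sqrt (y j) :=
      Finset.sum_nonneg fun j _ => mul_nonneg (Real.sqrt_nonneg _) (Real.sqrt_nonneg _)
    calc N m ^ 2 ≤ (∑ j ∈ Finset.range n, Real.sqrt (x j) * Real.sqrt (y j))^2 := by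
          apply sq_le_sq' <;> nlinarith [Nnonneg m]
      _ ≤ N (m-1) * N (m+1) := hsumcs
  -- base case
  have base : N p ≤ c * N (p-1) := by
    have : ∀ j ∈ Finset.range n,
        (∫ t in ((j:ℝ)*h)..(((j:ℝ)+1)*h), ((derivative^[p] (P j)).eval t)^2)
        ≤ c * ∫ t in ((j:ℝ)*h)..(((j:ℝ)+1)*h), ((derivative^[p-1] (P j)).eval t)^2 := by
      intro j hj
      have hdeg1 : (derivative^[p-1] (P j)).natDegree ≤ 1 := by
        have h1 := Polynomial.natDegree_iterate_derivative (P j) (p-1)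
        have h2 := hdeg j (Finset.mem_range.mp hj)
        omega
      have hD : derivative^[p] (P j) = derivative (derivative^[p-1] (P j)) := by
        conv_lhs => rw [show p = (p-1)+1 by omega]
        exact hDsucc (p-1) j
      have heb := elem_bound hdeg1 (a := (j:ℝ)*h) hh
      have hpt : ((j:ℝ)*h) + h = ((j:ℝ)+1)*h := by ring
      rw [hpt] at heb
      rw [hD]
      exact heb
    calc N p ≤ ∑ j ∈ Finset.range n, c * ∫ t in ((j:ℝ)*h)..(((j:ℝ)+1)*h),
          ((derivative^[p-1] (P j)).eval t)^2 := Finset.sum_le_sum this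
      _ = c * N (p-1) := by rw [← Finset.mul_sum]
  -- downward induction
  have chain : ∀ i k, 1 ≤ k → k ≤ p → p - k ≤ i → N k ≤ c * N (k-1) := by
    intro i
    induction i with
    | zero =>
      intro k hk1 hkp hpk
      have : k = p := by omega
      subst this
      exact base
    | succ i ih =>
      intro k hk1 hkp hpk
      by_cases hkp' : k = p
      · subst hkp'; exact base
      · have hklt : k < p := by omega
        have hnext := ih (k+1) (by omega) (by omega) (by omega)
        have : (k+1) - 1 = k := by omega
        rw [this] at hnext
        have hsq := Nsq k hk1 hklt
        rcases eq_or_lt_of_le (Nnonneg k) with h0 | h0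
        · rw [← h0]
          exact mul_nonneg hc0 (Nnonneg (k-1))
        · have hmul := mul_le_mul_of_nonneg_left hnext (Nnonneg (k-1))
          have : N k * N k ≤ (c * N (k-1)) * N k := by nlinarith [hsq, hmul]
          exact le_of_mul_le_mul_right this h0
  have := chain p 1 (le_refl _) hp (by omega)
  simpa [hN] using this

lemma oneD_lintegral (p n : ℕ) (h : ℝ) (hp : 1 ≤ p) (hh : 0 < h) (hn : 0 < n)
    (hgrid : (1:ℝ) = n*h) (u : ℝ → ℝ) (hu : IsReducedSplineOn p n h 0 1 u) :
    ∫⁻ t in Set.Ioo (0:ℝ) 1, ENNReal.ofReal ((deriv u t)^2) ≤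
      ENNReal.ofReal (12*(h⁻¹)^2) * ∫⁻ t in Set.Ioo (0:ℝ) 1, ENNReal.ofReal ((u t)^2) := by
  obtain ⟨P', hdeg, hueq, hmatch, hbdry⟩ := spline_struct p n h hp hh hn hgrid u hu
  have hchain := chain_bound p n h hp hh hn hgrid P' hdeg hmatch hbdry
  have hne : ∀ j : ℕ, (j:ℝ)*h < ((j:ℝ)+1)*h := by
    intro j; nlinarith [Nat.cast_nonneg (α := ℝ) j]
  -- the union of open elements
  set U : Set ℝ := ⋃ j ∈ Finset.range n, Set.Ioo ((j:ℝ)*h) (((j:ℝ)+1)*h) with hU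
  have hUsub : U ⊆ Set.Ioo (0:ℝ) 1 := by
    intro x hx
    simp only [hU, Set.mem_iUnion] at hx
    obtain ⟨j, hj, hx⟩ := hx
    have hj' : j < n := Finset.mem_range.mp hj
    constructor
    · have : (0:ℝ) ≤ (j:ℝ)*h := by positivity
      linarith [hx.1]
    · have : ((j:ℝ)+1)*h ≤ 1 := by
        rw [hgrid]
        have : (j:ℝ)+1 ≤ (n:ℝ) := by exact_mod_cast hj'
        nlinarith
      linarith [hx.2]
  have hae : Set.Ioo (0:ℝ) 1 =ᵐ[volume] U := by
    rw [MeasureTheory.ae_eq_set]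
    constructor
    · -- Ioo \ U is contained in grid points
      have hsub : Set.Ioo (0:ℝ) 1 \ U ⊆
          ↑((Finset.range (n+1)).image fun j : ℕ => (j:ℝ)*h) := by
        intro x hx
        obtain ⟨⟨hx0, hx1⟩, hxU⟩ := hx
        set j : ℕ := (⌊x/h⌋).toNat with hj
        have hxh : 0 < x / h := div_pos hx0 hh
        have hfl : (0:ℤ) ≤ ⌊x/h⌋ := Int.floor_nonneg.mpr (le_of_lt hxh)
        have hjr : (j:ℝ) = (⌊x/h⌋ : ℝ) := by
          rw [hj]; exact_mod_cast Int.toNat_of_nonneg hfl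
        have h1 : (j:ℝ) ≤ x / h := by rw [hjr]; exact Int.floor_le _
        have h2 : x / h < (j:ℝ) + 1 := by
          rw [hjr]
          have := Int.lt_floor_add_one (x/h)
          push_cast at this ⊢
          linarith
        have hjx : (j:ℝ)*h ≤ x := (le_div_iff₀ hh).mp h1
        have hxj : x < ((j:ℝ)+1)*h := (div_lt_iff₀ hh).mp h2
        have hjn : j < n := by
          have : x/h < (n:ℝ) := by
            rw [div_lt_iff₀ hh]
            calc x < 1 := hx1
              _ = (n:ℝ)*h := hgrid
          by_contra hcon
          push_neg at hcon
          have : (n:ℝ) ≤ (j:ℝ) := by exact_mod_cast hcon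
          linarith
        have hxeq : x = (j:ℝ)*h := by
          by_contra hne'
          apply hxU
          simp only [hU, Set.mem_iUnion]
          exact ⟨j, Finset.mem_range.mpr hjn, lt_of_le_of_ne hjx (Ne.symm hne'), hxj⟩
        rw [Finset.coe_image]
        exact ⟨j, by simp [Finset.mem_range]; omega, hxeq.symm⟩
      refine le_antisymm ?_ zero_le
      calc volume (Set.Ioo (0:ℝ) 1 \ U) ≤
          volume ↑((Finset.range (n+1)).image fun j : ℕ => (j:ℝ)*h) :=
            measure_mono hsub
        _ = 0 := (Finset.finite_toSet _).measure_zero _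
    · rw [Set.diff_eq_empty.mpr hUsub]
      simp
  have hdisj : Set.PairwiseDisjoint ↑(Finset.range n)
      (fun j : ℕ => Set.Ioo ((j:ℝ)*h) (((j:ℝ)+1)*h)) := by
    intro i _ j _ hij
    have key : ∀ a b : ℕ, a < b →
        Disjoint (Set.Ioo ((a:ℝ)*h) (((a:ℝ)+1)*h)) (Set.Ioo ((b:ℝ)*h) (((b:ℝ)+1)*h)) := by
      intro a b hab
      apply Set.disjoint_left.mpr
      rintro x ⟨_, hx2⟩ ⟨hx3, _⟩
      have : (a:ℝ)+1 ≤ (b:ℝ) := by exact_mod_cast hab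
      nlinarith
    rcases Nat.lt_or_ge i j with hlt | hge
    · exact key i j hlt
    · exact (key j i (by omega)).symm
  -- decompose both sides
  -- generic: for a function v equal to Q_j on each element,
  have main : ∀ (Q : ℕ → Polynomial ℝ) (v : ℝ → ℝ),
      (∀ j, j < n → ∀ x ∈ Set.Ioo ((j:ℝ)*h) (((j:ℝ)+1)*h), v x = (Q j).eval x) →
      ∫⁻ t in Set.Ioo (0:ℝ) 1, ENNReal.ofReal ((v t)^2)
        = ENNReal.ofReal (∑ j ∈ Finset.range n,
            ∫ t in ((j:ℝ)*h)..(((j:ℝ)+1)*h), ((Q j).eval t)^2) := by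
    intro Q v hv
    rw [setLIntegral_congr hae, hU, lintegral_biUnion_finset hdisj
      (fun j _ => measurableSet_Ioo)]
    rw [ENNReal.ofReal_sum_of_nonneg (fun j _ =>
      intervalIntegral.integral_nonneg (le_of_lt (hne j)) (fun t _ => sq_nonneg _))]
    refine Finset.sum_congr rfl fun j hj => ?_
    have hj' : j < n := Finset.mem_range.mp hj
    have hQint : IntegrableOn (fun t => ((Q j).eval t)^2)
        (Set.Ioo ((j:ℝ)*h) (((j:ℝ)+1)*h)) volume :=
      (((Q j).continuous.pow 2).integrableOn_Icc).mono_set Set.Ioo_subset_Icc_self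
    calc ∫⁻ t in Set.Ioo ((j:ℝ)*h) (((j:ℝ)+1)*h), ENNReal.ofReal ((v t)^2)
        = ∫⁻ t in Set.Ioo ((j:ℝ)*h) (((j:ℝ)+1)*h), ENNReal.ofReal (((Q j).eval t)^2) := by
          refine setLIntegral_congr_fun measurableSet_Ioo ?_
          exact (fun t ht => by rw [hv j hj' t ht])
      _ = ENNReal.ofReal (∫ t in Set.Ioo ((j:ℝ)*h) (((j:ℝ)+1)*h), ((Q j).eval t)^2) :=
          (ofReal_integral_eq_lintegral_ofReal hQint
            (Filter.Eventually.of_forall fun t => sq_nonneg _)).symm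
      _ = ENNReal.ofReal (∫ t in ((j:ℝ)*h)..(((j:ℝ)+1)*h), ((Q j).eval t)^2) := by
          rw [intervalIntegral.integral_of_le (le_of_lt (hne j)),
            MeasureTheory.integral_Ioc_eq_integral_Ioo]
  -- apply to u and deriv u
  have hmain_u := main (fun j => derivative^[0] (P' j)) u (by
    intro j hj x hx
    simpa using hueq j hj x hx)
  have hmain_du := main (fun j => derivative^[1] (P' j)) (deriv u) (by
    intro j hj x hx
    have hev : u =ᶠ[𝓝 x] fun y => (P' j).eval y :=
      Filter.eventuallyEq_of_mem (isOpen_Ioo.mem_nhds hx) (fun y hy => hueq j hj y hy)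
    rw [hev.deriv_eq]
    simp [Polynomial.deriv])
  rw [hmain_u, hmain_du, ← ENNReal.ofReal_mul (by positivity)]
  exact ENNReal.ofReal_le_ofReal hchain

section Closure

variable {p n : ℕ} {h : ℝ}

lemma iterDerivWithin_zero_fun {s : Set ℝ} (hs : UniqueDiffOn ℝ s) {x : ℝ} (hx : x ∈ s) (k : ℕ) :
    iteratedDerivWithin k (fun _ : ℝ => (0:ℝ)) s x = 0 := by
  have h0 := iteratedFDerivWithin_zero_fun (𝕜 := ℝ) (E := ℝ) (F := ℝ) (s := s) (i := k)
  simp only [iteratedDerivWithin, h0]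
  rfl

lemma hud01 : UniqueDiffOn ℝ (Set.Icc (0:ℝ) 1) := uniqueDiffOn_Icc one_pos

lemma reduced_zero (hp : 1 ≤ p) : IsReducedSplineOn p n h 0 1 (fun _ => (0:ℝ)) := by
  refine ⟨⟨contDiffOn_const, fun j hj => ⟨0, by simp, fun x hx => by simp⟩⟩, ?_⟩
  intro l hl
  exact ⟨iterDerivWithin_zero_fun hud01 (by simp : (0:ℝ) ∈ Set.Icc (0:ℝ) 1) _,
    iterDerivWithin_zero_fun hud01 (by simp : (1:ℝ) ∈ Set.Icc (0:ℝ) 1) _⟩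

lemma reduced_add {u v : ℝ → ℝ} (hu : IsReducedSplineOn p n h 0 1 u)
    (hv : IsReducedSplineOn p n h 0 1 v) : IsReducedSplineOn p n h 0 1 (u + v) := by
  obtain ⟨⟨hu1, hu2⟩, hu3⟩ := hu
  obtain ⟨⟨hv1, hv2⟩, hv3⟩ := hv
  refine ⟨⟨hu1.add hv1, fun j hj => ?_⟩, fun l hl => ?_⟩
  · obtain ⟨P, hP1, hP2⟩ := hu2 j hj
    obtain ⟨Q, hQ1, hQ2⟩ := hv2 j hj
    refine ⟨P + Q, le_trans (Polynomial.natDegree_add_le P Q) (by omega), fun x hx => ?_⟩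
    simp [Pi.add_apply, hP2 x hx, hQ2 x hx]
  · have hle : ((2*l+1 : ℕ) : WithTop ℕ∞) ≤ ((p - 1 : ℕ) : WithTop ℕ∞) := by
      have : 2*l+1 ≤ p - 1 := by omega
      exact_mod_cast this
    constructor
    · rw [iteratedDerivWithin_add (by simp : (0:ℝ) ∈ Set.Icc (0:ℝ) 1) hud01
        (hu1.of_le hle 0 (by simp)) (hv1.of_le hle 0 (by simp)), (hu3 l hl).1, (hv3 l hl).1, add_zero]
    · rw [iteratedDerivWithin_add (by simp : (1:ℝ) ∈ Set.Icc (0:ℝ) 1) hud01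
        (hu1.of_le hle 1 (by simp)) (hv1.of_le hle 1 (by simp)), (hu3 l hl).2, (hv3 l hl).2, add_zero]

lemma reduced_smul {u : ℝ → ℝ} (c : ℝ) (hu : IsReducedSplineOn p n h 0 1 u) :
    IsReducedSplineOn p n h 0 1 (c • u) := by
  obtain ⟨⟨hu1, hu2⟩, hu3⟩ := hu
  refine ⟨⟨hu1.const_smul c, fun j hj => ?_⟩, fun l hl => ?_⟩
  · obtain ⟨P, hP1, hP2⟩ := hu2 j hj
    refine ⟨Polynomial.C c * P, le_trans (Polynomial.natDegree_C_mul_le c P) hP1, fun x hx => ?_⟩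
    simp [Pi.smul_apply, hP2 x hx]
  · have hle : ((2*l+1 : ℕ) : WithTop ℕ∞) ≤ ((p - 1 : ℕ) : WithTop ℕ∞) := by
      have : 2*l+1 ≤ p - 1 := by omega
      exact_mod_cast this
    constructor
    · rw [iteratedDerivWithin_const_smul (by simp : (0:ℝ) ∈ Set.Icc (0:ℝ) 1) hud01
        c (hu1.of_le hle 0 (by simp)), (hu3 l hl).1, smul_zero]
    · rw [iteratedDerivWithin_const_smul (by simp : (1:ℝ) ∈ Set.Icc (0:ℝ) 1) hud01
        c (hu1.of_le hle 1 (by simp)), (hu3 l hl).2, smul_zero]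

lemma reduced_smul' {u : ℝ → ℝ} (c : ℝ) (hu : IsReducedSplineOn p n h 0 1 u) :
    IsReducedSplineOn p n h 0 1 (fun t => c * u t) :=
  reduced_smul c hu

end Closure

section Slice

variable {d p n : ℕ} {h : ℝ}

lemma slice_reduced (hp : 1 ≤ p) {w : (Fin d → ℝ) → ℝ}
    (hw : w ∈ Submodule.span ℝ (TensorReduced p n d h)) (l : Fin d) (y : Fin d → ℝ) :
    IsReducedSplineOn p n h 0 1 (fun t => w (Function.update y l t)) := by
  induction hw using Submodule.span_induction with
  | mem x hx =>
    obtain ⟨f, hf, rfl⟩ := hx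
    have heq : (fun t => ∏ m, f m (Function.update y l t m))
        = fun t => (∏ m ∈ Finset.univ.erase l, f m (y m)) * f l t := by
      funext t
      rw [← Finset.prod_erase_mul Finset.univ _ (Finset.mem_univ l)]
      congr 1
      · exact Finset.prod_congr rfl fun m hm =>
          congrArg (f m) (Function.update_of_ne (Finset.ne_of_mem_erase hm) _ _)
      · exact congrArg (f l) (Function.update_self _ _ _)
    rw [show (fun t => (fun x => ∏ m, f m (x m)) (Function.update y l t))
      = fun t => ∏ m, f m (Function.update y l t m) from rfl, heq]
    exact reduced_smul' _ (hf l)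
  | zero => exact reduced_zero hp
  | add x z hx hz ihx ihz => exact reduced_add ihx ihz
  | smul a x hx ihx => exact reduced_smul a ihx

lemma span_continuousOn (hp : 1 ≤ p) {w : (Fin d → ℝ) → ℝ}
    (hw : w ∈ Submodule.span ℝ (TensorReduced p n d h)) :
    ContinuousOn w (Set.univ.pi fun _ : Fin d => Set.Icc (0:ℝ) 1) := by
  induction hw using Submodule.span_induction with
  | mem x hx =>
    obtain ⟨f, hf, rfl⟩ := hx
    apply continuousOn_finset_prod
    intro m _
    have hfm : ContinuousOn (f m) (Set.Icc (0:ℝ) 1) := (hf m).1.1.continuousOn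
    exact hfm.comp (continuous_apply m).continuousOn
      (fun x hx => hx m (Set.mem_univ m))
  | zero => exact continuousOn_const
  | add x z hx hz ihx ihz => exact ihx.add ihz
  | smul a x hx ihx => exact ihx.const_smul a

lemma partial_le (w : (Fin d → ℝ) → ℝ) (x : Fin d → ℝ) (l : Fin d) :
    (fderiv ℝ w x (Pi.single l 1)) ^ 2 ≤
      (deriv (fun t => w (Function.update x l t)) (x l)) ^ 2 := by
  by_cases hD : DifferentiableAt ℝ w x
  · have hupd : (fun t : ℝ => Function.update x l t)
        = fun t : ℝ => x + (t - x l) • (Pi.single l (1:ℝ) : Fin d → ℝ) := by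
      funext t
      funext m
      by_cases hm : m = l
      · subst hm; simp
      · simp [Function.update_of_ne hm, Pi.single_eq_of_ne hm]
    have hγ : HasDerivAt (fun t : ℝ => Function.update x l t) (Pi.single l 1) (x l) := by
      rw [hupd]
      have h1 : HasDerivAt (fun t : ℝ => t - x l) 1 (x l) :=
        (hasDerivAt_id (x l)).sub_const (x l)
      have h2 := (h1.smul_const (Pi.single l 1 : Fin d → ℝ)).const_add x
      simpa using h2
    have hx0 : Function.update x l (x l) = x := Function.update_eq_self l x
    have hcomp : HasDerivAt (fun t => w (Function.update x l t))
        (fderiv ℝ w x (Pi.single l 1)) (x l) := by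
      have hF : HasFDerivAt w (fderiv ℝ w x) ((fun t : ℝ => Function.update x l t) (x l)) := by
        rw [show (fun t : ℝ => Function.update x l t) (x l) = x from hx0]
        exact hD.hasFDerivAt
      exact hF.comp_hasDerivAt (x l) hγ
    rw [hcomp.deriv]
  · rw [fderiv_zero_of_not_differentiableAt hD]
    simpa using sq_nonneg _
end Slice


lemma meas_ind {d : ℕ} {s : Set (Fin d → ℝ)} (hs : MeasurableSet s) {f : (Fin d → ℝ) → ℝ}
    (hf : ContinuousOn f s) : Measurable (s.indicator f) := by
  have h1 : Measurable (f ∘ (Subtype.val : s → _)) :=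
    (continuousOn_iff_continuous_restrict.mp hf).measurable
  have h2 := (MeasurableEmbedding.subtype_coe hs).measurable_extend h1
    (measurable_const : Measurable fun _ : (Fin d → ℝ) => (0:ℝ))
  convert h2 using 1
  funext x
  by_cases hx : x ∈ s
  · rw [Set.indicator_of_mem hx]
    have hxx : x = (⟨x, hx⟩ : s).val := rfl
    conv_rhs => rw [hxx]
    rw [Function.Injective.extend_apply Subtype.val_injective]
    rfl
  · rw [Set.indicator_of_notMem hx, Function.extend_apply']
    rintro ⟨a, rfl⟩; exact hx a.2

theorem tensor_product_inverse_inequality (d p n : ℕ) (h : ℝ)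
    (hd : 1 ≤ d) (hp : 1 ≤ p) (hh : 0 < h) (hn : 0 < n) (hgrid : (1 : ℝ) = n * h)
    (w : (Fin d → ℝ) → ℝ) (hw : w ∈ Submodule.span ℝ (TensorReduced p n d h)) :
    Real.sqrt (∫ x in Set.univ.pi fun _ : Fin d => Set.Ioo (0 : ℝ) 1,
        ∑ l, (fderiv ℝ w x (Pi.single l 1)) ^ 2) ≤
      2 * Real.sqrt (3 * d) * h⁻¹ *
        Real.sqrt (∫ x in Set.univ.pi fun _ : Fin d => Set.Ioo (0 : ℝ) 1, w x ^ 2) := by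
  classical
  set cube : Set (Fin d → ℝ) := Set.univ.pi fun _ : Fin d => Set.Ioo (0:ℝ) 1 with hcube
  set cubeC : Set (Fin d → ℝ) := Set.univ.pi fun _ : Fin d => Set.Icc (0:ℝ) 1 with hcubeC
  have hcubeM : MeasurableSet cube := MeasurableSet.univ_pi fun _ => measurableSet_Ioo
  have hsub : cube ⊆ cubeC := Set.pi_mono fun i _ => Set.Ioo_subset_Icc_self
  have hwc : ContinuousOn w cubeC := span_continuousOn hp hw
  set c : ℝ := 12*(h⁻¹)^2 with hc
  have hc0 : (0:ℝ) ≤ c := by positivity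
  set μr : Fin d → Measure ℝ := fun _ => volume with hμr
  set x₀ : Fin d → ℝ := fun _ => 0 with hx₀
  -- measurability
  have Fmeas : ∀ l : Fin d, Measurable fun x : Fin d → ℝ =>
      ENNReal.ofReal ((fderiv ℝ w x (Pi.single l 1))^2) := fun l =>
    ((measurable_fderiv_apply_const ℝ w (Pi.single l 1)).pow_const 2).ennreal_ofReal
  set G : (Fin d → ℝ) → ℝ≥0∞ := cube.indicator fun x => ENNReal.ofReal ((w x)^2) with hG
  have hGm : Measurable G := by
    have h1 : Measurable (cube.indicator fun x => (w x)^2) :=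
      meas_ind hcubeM ((hwc.mono hsub).pow 2)
    have h2 : G = fun x => ENNReal.ofReal ((cube.indicator fun x => (w x)^2) x) := by
      funext x
      by_cases hx : x ∈ cube
      · simp [hG, Set.indicator_of_mem hx]
      · simp [hG, Set.indicator_of_notMem hx]
    rw [h2]
    exact h1.ennreal_ofReal
  -- the splitting identity
  have hsplit : ∀ (f : (Fin d → ℝ) → ℝ≥0∞) (l : Fin d), Measurable f →
      (∫⁻ x, f x) = (∫⋯∫⁻_(Finset.univ.erase l),
        (fun x => ∫⁻ t, f (Function.update x l t)) ∂μr) x₀ := by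
    intro f l hf
    have hu : (Finset.univ : Finset (Fin d)) = (Finset.univ.erase l) ∪ {l} := by
      rw [Finset.union_comm, ← Finset.insert_eq, Finset.insert_erase (Finset.mem_univ l)]
    calc (∫⁻ x, f x)
        = (∫⋯∫⁻_Finset.univ, f ∂μr) x₀ := by
          rw [MeasureTheory.volume_pi, lintegral_eq_lmarginal_univ x₀]
      _ = (∫⋯∫⁻_((Finset.univ.erase l) ∪ {l}), f ∂μr) x₀ := by rw [← hu]
      _ = (∫⋯∫⁻_(Finset.univ.erase l), (∫⋯∫⁻_{l}, f ∂μr) ∂μr) x₀ := by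
          rw [lmarginal_union μr f hf
            (Finset.disjoint_singleton_right.mpr (Finset.notMem_erase l _))]
      _ = (∫⋯∫⁻_(Finset.univ.erase l),
            (fun x => ∫⁻ t, f (Function.update x l t)) ∂μr) x₀ := by
          rw [lmarginal_singleton]
  have hpull : ∀ (s : Finset (Fin d)) (F : (Fin d → ℝ) → ℝ≥0∞) (x : Fin d → ℝ),
      (∫⋯∫⁻_s, (fun y => ENNReal.ofReal c * F y) ∂μr) x
        = ENNReal.ofReal c * (∫⋯∫⁻_s, F ∂μr) x := by
    intro s F x
    simp only [MeasureTheory.lmarginal]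
    exact lintegral_const_mul' _ _ ENNReal.ofReal_ne_top
  -- per-direction bound
  have Hl : ∀ l : Fin d,
      (∫⁻ x in cube, ENNReal.ofReal ((fderiv ℝ w x (Pi.single l 1))^2)) ≤
        ENNReal.ofReal c * ∫⁻ x in cube, ENNReal.ofReal ((w x)^2) := by
    intro l
    set Fl : (Fin d → ℝ) → ℝ≥0∞ :=
      cube.indicator (fun x => ENNReal.ofReal ((fderiv ℝ w x (Pi.single l 1))^2)) with hFl
    have hFlm : Measurable Fl := (Fmeas l).indicator hcubeM
    have inner : ∀ x : Fin d → ℝ,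
        (∫⁻ t, Fl (Function.update x l t)) ≤
          ENNReal.ofReal c * ∫⁻ t, G (Function.update x l t) := by
      intro x
      by_cases hx : ∀ m, m ≠ l → x m ∈ Set.Ioo (0:ℝ) 1
      · have hmem : ∀ t : ℝ, Function.update x l t ∈ cube ↔ t ∈ Set.Ioo (0:ℝ) 1 := by
          intro t
          constructor
          · intro hm
            have := hm l (Set.mem_univ l)
            rwa [Function.update_self] at this
          · intro ht m _
            by_cases hm : m = l
            · subst hm; rwa [Function.update_self]
            · rw [Function.update_of_ne hm]; exact hx m hm
        have hFl_eq : ∀ t : ℝ, Fl (Function.update x l t)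
            = (Set.Ioo (0:ℝ) 1).indicator (fun t => ENNReal.ofReal
                ((fderiv ℝ w (Function.update x l t) (Pi.single l 1))^2)) t := by
          intro t
          by_cases ht : t ∈ Set.Ioo (0:ℝ) 1
          · rw [hFl, Set.indicator_of_mem ((hmem t).mpr ht), Set.indicator_of_mem ht]
          · rw [hFl, Set.indicator_of_notMem (fun hc => ht ((hmem t).mp hc)),
              Set.indicator_of_notMem ht]
        have hG_eq : ∀ t : ℝ, G (Function.update x l t)
            = (Set.Ioo (0:ℝ) 1).indicator (fun t => ENNReal.ofReal
                ((w (Function.update x l t))^2)) t := by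
          intro t
          by_cases ht : t ∈ Set.Ioo (0:ℝ) 1
          · rw [hG, Set.indicator_of_mem ((hmem t).mpr ht), Set.indicator_of_mem ht]
          · rw [hG, Set.indicator_of_notMem (fun hc => ht ((hmem t).mp hc)),
              Set.indicator_of_notMem ht]
        set uSlice : ℝ → ℝ := fun t => w (Function.update x l t) with huS
        have h1d := oneD_lintegral p n h hp hh hn hgrid uSlice (slice_reduced hp hw l x)
        calc (∫⁻ t, Fl (Function.update x l t))
            = ∫⁻ t in Set.Ioo (0:ℝ) 1, ENNReal.ofReal
                ((fderiv ℝ w (Function.update x l t) (Pi.single l 1))^2) := by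
              simp_rw [hFl_eq]
              rw [lintegral_indicator measurableSet_Ioo]
          _ ≤ ∫⁻ t in Set.Ioo (0:ℝ) 1, ENNReal.ofReal ((deriv uSlice t)^2) := by
              refine lintegral_mono fun t => ?_
              apply ENNReal.ofReal_le_ofReal
              have hk := partial_le w (Function.update x l t) l
              simpa [Function.update_idem, Function.update_self, huS] using hk
          _ ≤ ENNReal.ofReal c * ∫⁻ t in Set.Ioo (0:ℝ) 1,
                ENNReal.ofReal ((uSlice t)^2) := h1d
          _ = ENNReal.ofReal c * ∫⁻ t, G (Function.update x l t) := by
              simp_rw [hG_eq]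
              rw [lintegral_indicator measurableSet_Ioo]
      · have hFl0 : ∀ t, Fl (Function.update x l t) = 0 := by
          intro t
          apply Set.indicator_of_notMem
          intro hcmem
          push_neg at hx
          obtain ⟨m, hml, hm⟩ := hx
          apply hm
          have := hcmem m (Set.mem_univ m)
          rwa [Function.update_of_ne hml] at this
        simp only [hFl0, lintegral_const, zero_mul]
        exact zero_le
    calc (∫⁻ x in cube, ENNReal.ofReal ((fderiv ℝ w x (Pi.single l 1))^2))
        = ∫⁻ x, Fl x := (lintegral_indicator hcubeM _).symm
      _ = (∫⋯∫⁻_(Finset.univ.erase l),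
            (fun x => ∫⁻ t, Fl (Function.update x l t)) ∂μr) x₀ := hsplit Fl l hFlm
      _ ≤ (∫⋯∫⁻_(Finset.univ.erase l),
            (fun x => ENNReal.ofReal c * ∫⁻ t, G (Function.update x l t)) ∂μr) x₀ :=
          lmarginal_mono (fun x => inner x) x₀
      _ = ENNReal.ofReal c * (∫⋯∫⁻_(Finset.univ.erase l),
            (fun x => ∫⁻ t, G (Function.update x l t)) ∂μr) x₀ := hpull _ _ _
      _ = ENNReal.ofReal c * ∫⁻ x, G x := by rw [← hsplit G l hGm]
      _ = ENNReal.ofReal c * ∫⁻ x in cube, ENNReal.ofReal ((w x)^2) := by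
          rw [lintegral_indicator hcubeM]
  -- summing over directions
  set LL : ℝ≥0∞ := ∫⁻ x in cube,
    ENNReal.ofReal (∑ l, (fderiv ℝ w x (Pi.single l 1))^2) with hLL
  set RR : ℝ≥0∞ := ∫⁻ x in cube, ENNReal.ofReal ((w x)^2) with hRR
  have htot : LL ≤ ((d : ℝ≥0∞) * ENNReal.ofReal c) * RR := by
    have hsum : LL = ∑ l, ∫⁻ x in cube,
        ENNReal.ofReal ((fderiv ℝ w x (Pi.single l 1))^2) := by
      rw [hLL]
      have hpt : ∀ x : Fin d → ℝ, ENNReal.ofReal (∑ l, (fderiv ℝ w x (Pi.single l 1))^2)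
          = ∑ l, ENNReal.ofReal ((fderiv ℝ w x (Pi.single l 1))^2) := fun x =>
        ENNReal.ofReal_sum_of_nonneg (fun i _ => sq_nonneg _)
      simp_rw [hpt]
      exact lintegral_finset_sum _ (fun l _ => Fmeas l)
    rw [hsum]
    calc (∑ l : Fin d, ∫⁻ x in cube, ENNReal.ofReal ((fderiv ℝ w x (Pi.single l 1))^2))
        ≤ ∑ _l : Fin d, ENNReal.ofReal c * RR := Finset.sum_le_sum fun l _ => Hl l
      _ = ((d : ℝ≥0∞) * ENNReal.ofReal c) * RR := by
          rw [Finset.sum_const, Finset.card_univ, Fintype.card_fin, nsmul_eq_mul, mul_assoc]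
  -- finiteness of RR
  have hcompact : IsCompact cubeC := isCompact_univ_pi fun _ => isCompact_Icc
  obtain ⟨M, hM⟩ := hcompact.exists_bound_of_continuousOn hwc
  have hRRlt : RR ≠ ⊤ := by
    have hle : RR ≤ ENNReal.ofReal (M^2) * volume cube := by
      rw [hRR]
      calc (∫⁻ x in cube, ENNReal.ofReal ((w x)^2))
          ≤ ∫⁻ _x in cube, ENNReal.ofReal (M^2) := by
            refine setLIntegral_mono' hcubeM fun x hx => ?_
            apply ENNReal.ofReal_le_ofReal
            have h1 := hM x (hsub hx)
            rw [Real.norm_eq_abs] at h1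
            nlinarith [abs_nonneg (w x), sq_abs (w x)]
        _ = ENNReal.ofReal (M^2) * volume cube := by rw [setLIntegral_const]
    exact ne_top_of_le_ne_top
      (ENNReal.mul_ne_top ENNReal.ofReal_ne_top
        (lt_of_le_of_lt (measure_mono hsub) hcompact.measure_lt_top).ne) hle
  -- real versions
  have hLreal : (∫ x in cube, ∑ l, (fderiv ℝ w x (Pi.single l 1))^2) = LL.toReal := by
    rw [MeasureTheory.integral_eq_lintegral_of_nonneg_ae
      (ae_of_all _ fun x => Finset.sum_nonneg fun l _ => sq_nonneg _)
      ((Finset.univ.measurable_sum (fun l _ =>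
        (measurable_fderiv_apply_const ℝ w (Pi.single l 1)).pow_const 2)).aestronglyMeasurable)]
  have hRreal : (∫ x in cube, (w x)^2) = RR.toReal := by
    rw [MeasureTheory.integral_eq_lintegral_of_nonneg_ae
      (ae_of_all _ fun x => sq_nonneg _)
      ((((hwc.mono hsub).aemeasurable hcubeM).pow_const 2).aestronglyMeasurable)]
  have hmono : LL.toReal ≤ ((d:ℝ) * c) * RR.toReal := by
    have h2 : (((d:ℝ≥0∞) * ENNReal.ofReal c) * RR) ≠ ⊤ :=
      ENNReal.mul_ne_top (ENNReal.mul_ne_top (ENNReal.natCast_ne_top d)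
        ENNReal.ofReal_ne_top) hRRlt
    calc LL.toReal ≤ (((d:ℝ≥0∞) * ENNReal.ofReal c) * RR).toReal :=
          ENNReal.toReal_mono h2 htot
      _ = ((d:ℝ) * c) * RR.toReal := by
          rw [ENNReal.toReal_mul, ENNReal.toReal_mul, ENNReal.toReal_natCast,
            ENNReal.toReal_ofReal hc0]
  rw [hLreal, hRreal]
  have hRnn : (0:ℝ) ≤ RR.toReal := ENNReal.toReal_nonneg
  have hsqrt : Real.sqrt (((d:ℝ) * c) * RR.toReal)
      = 2 * Real.sqrt (3 * d) * h⁻¹ * Real.sqrt RR.toReal := by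
    have hs : Real.sqrt (3*(d:ℝ)) ^ 2 = 3*(d:ℝ) := Real.sq_sqrt (by positivity)
    have hkey : ((d:ℝ) * c) = (2 * Real.sqrt (3 * (d:ℝ)) * h⁻¹)^2 := by
      rw [hc]
      nlinarith [hs]
    rw [hkey, Real.sqrt_mul (sq_nonneg _), Real.sqrt_sq (by positivity)]
  calc Real.sqrt LL.toReal ≤ Real.sqrt (((d:ℝ) * c) * RR.toReal) :=
        Real.sqrt_le_sqrt hmono
    _ = 2 * Real.sqrt (3 * d) * h⁻¹ * Real.sqrt RR.toReal := hsqrt
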